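/- arXiv:1408.1057 — 2 statements merged into one kernel-verified Lean document; each statement's English description precedes it below -/
import Mathlib

section
/- Let ω ∈ ℂ with |ω| = 1, ω not real, and s ∈ 𝔻, s ≠ 0, and let φ(z) = ω(s−z)/(1−s̄z). Then φ(0) = ωs and φ²(0) = ωs(1−ω)/(1−|s|²ω), and these two complex numbers are linearly independent over ℝ. -/
noncomputable section

/-- The disk automorphism `φ(z) = ω(s-z)/(1-s̄z)`. -/
def diskAut (ω s z : ℂ) : ℂ := ω * (s - z) / (1 - (starRingEnd ℂ) s * z)

theorem orbit_points_linearIndependent (ω s : ℂ) (hω : ‖ω‖ = 1) (hω' : ω.im ≠ 0)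
    (hs : s ≠ 0) (hs' : ‖s‖ < 1) :
    diskAut ω s 0 = ω * s ∧
    diskAut ω s (diskAut ω s 0) = ω * s * (1 - ω) / (1 - (‖s‖ : ℂ) ^ 2 * ω) ∧
    LinearIndependent ℝ ![diskAut ω s 0, diskAut ω s (diskAut ω s 0)] := by
  have h0 : diskAut ω s 0 = ω * s := by simp [diskAut]
  have hconj : (starRingEnd ℂ) s * s = (‖s‖ : ℂ) ^ 2 := by
    rw [mul_comm, Complex.mul_conj, Complex.normSq_eq_norm_sq]
    push_cast
    ring
  have hden : (1 : ℂ) - (‖s‖ : ℂ) ^ 2 * ω ≠ 0 := by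
    intro h
    have : (‖s‖ : ℂ) ^ 2 * ω = 1 := by linear_combination -h
    have h2 : ‖(‖s‖ : ℂ) ^ 2 * ω‖ = 1 := by rw [this]; simp
    rw [norm_mul, hω, mul_one, norm_pow, Complex.norm_real, norm_norm] at h2
    nlinarith [norm_nonneg s]
  have h1 : diskAut ω s (diskAut ω s 0) = ω * s * (1 - ω) / (1 - (‖s‖ : ℂ) ^ 2 * ω) := by
    rw [h0, diskAut]
    have : 1 - (starRingEnd ℂ) s * (ω * s) = 1 - (‖s‖ : ℂ) ^ 2 * ω := by
      rw [← hconj]; ring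
    rw [this]
    ring_nf
  have hωs : ω * s ≠ 0 := by
    refine mul_ne_zero (fun h => ?_) hs
    rw [h] at hω; simp at hω
  have hω1 : (1 : ℂ) - ω ≠ 0 := by
    intro h
    have : ω = 1 := by linear_combination -h
    rw [this] at hω'; simp at hω'
  refine ⟨h0, h1, ?_⟩
  rw [linearIndependent_fin2]
  constructor
  · simp only [Matrix.cons_val_one, Matrix.head_cons, h1]
    exact div_ne_zero (mul_ne_zero hωs hω1) hden
  · intro a ha
    rw [h0] at h1
    simp only [Matrix.cons_val_one, Matrix.head_cons, Matrix.cons_val_zero, h0, h1] at ha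
    have key : (a : ℂ) * (ω * s * (1 - ω)) = ω * s * (1 - (‖s‖ : ℂ) ^ 2 * ω) := by
      rw [Complex.real_smul, mul_div_assoc', div_eq_iff hden] at ha
      linear_combination ha
    set r : ℝ := ‖s‖ ^ 2 with hr
    have key2 : (a : ℂ) * (1 - ω) = 1 - (r : ℂ) * ω := by
      refine mul_left_cancel₀ hωs (by rw [hr]; push_cast; linear_combination key)
    have him := congrArg Complex.im key2
    have hre := congrArg Complex.re key2
    simp only [Complex.mul_im, Complex.mul_re, Complex.sub_im, Complex.sub_re,
      Complex.ofReal_im, Complex.ofReal_re, Complex.one_im, Complex.one_re] at him hre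
    have ha2 : a = r := by
      have : (a - r) * ω.im = 0 := by linarith [him]
      rcases mul_eq_zero.1 this with h | h
      · linarith
      · exact absurd h hω'
    rw [ha2] at hre
    have h1r : r = 1 := by nlinarith [hre]
    have : ‖s‖ ^ 2 < 1 := by nlinarith [norm_nonneg s]
    rw [← hr] at this
    linarith
end
end

section
/- Let A be a unital C*-algebra with a closed *-subalgebra 𝒜 (not necessarily unital) and a closed unital *-subalgebra B, and suppose there is a character χ : B → ℂ such that b·a = χ(b)·a = a·b for all b ∈ B, a ∈ 𝒜, and such that b + a = 0 (b ∈ B, a ∈ 𝒜) implies b = 0 and a = 0. Then the set C = {b + a : b ∈ B, a ∈ 𝒜} is a *-subalgebra of A, and C is *-isomorphic to the minimal unitization of (ker χ) ⊕ 𝒜 via the map sending ((b − χ(b)·1, a), χ(b)) to b + a. -/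
set_option synthInstance.maxHeartbeats 1000000
set_option maxHeartbeats 1000000

noncomputable section

variable {A : Type*} [CStarAlgebra A]

/-- The kernel of a character `χ : B → ℂ`, as a non-unital star subalgebra of `B`. -/
def charKer {B : StarSubalgebra ℂ A} (χ : B →⋆ₐ[ℂ] ℂ) : NonUnitalStarSubalgebra ℂ B where
  carrier := {b | χ b = 0}
  add_mem' {x y} hx hy := by simp_all [Set.mem_setOf_eq, map_add]
  mul_mem' {x y} hx hy := by simp_all [Set.mem_setOf_eq, map_mul]
  zero_mem' := by simp
  smul_mem' c x hx := by simp_all [Set.mem_setOf_eq, map_smul]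
  star_mem' {x} hx := by simp_all [Set.mem_setOf_eq, map_star]

set_option maxHeartbeats 10000000 in
theorem sum_set_is_unitization
    (Asub : NonUnitalStarSubalgebra ℂ A) (hAc : IsClosed (Asub : Set A))
    (B : StarSubalgebra ℂ A) (hBc : IsClosed (B : Set A))
    (χ : B →⋆ₐ[ℂ] ℂ)
    (hcomm : ∀ (b : B) (a : A), a ∈ Asub →
      (b : A) * a = χ b • a ∧ a * (b : A) = χ b • a)
    (hzero : ∀ (b : B) (a : A), a ∈ Asub → (b : A) + a = 0 → (b : A) = 0 ∧ a = 0) :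
    ∃ C : StarSubalgebra ℂ A,
      (C : Set A) = {x | ∃ b ∈ B, ∃ a ∈ Asub, x = b + a} ∧
      ∃ Φ : Unitization ℂ (charKer χ × Asub) ≃⋆ₐ[ℂ] C,
        (∀ lam : ℂ, (Φ (algebraMap ℂ _ lam) : A) = lam • 1) ∧
        ∀ (b : B) (hb : χ b = 0) (a : Asub),
          (Φ (Unitization.inr ((⟨b, hb⟩, a) : charKer χ × Asub)) : A) = (b : A) + (a : A) := by
  -- the basic additive map from `ker χ × Asub` to `A`
  let ψ : (charKer χ × Asub) →⋆ₙₐ[ℂ] A :=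
    { toFun := fun p => (((p.1 : B) : A) + (p.2 : A))
      map_smul' := fun c p => by
        simp [smul_add]
      map_zero' := by simp
      map_add' := fun p q => by
        show (((p.1 + q.1 : charKer χ) : B) : A) + ((p.2 + q.2 : Asub) : A) = _
        push_cast
        abel
      map_mul' := fun p q => by
        have h1 : ((p.1 : B) : A) * (q.2 : A) = 0 := by
          rw [(hcomm (p.1 : B) (q.2 : A) q.2.2).1, p.1.2, zero_smul]
        have h2 : (p.2 : A) * ((q.1 : B) : A) = 0 := by
          rw [(hcomm (q.1 : B) (p.2 : A) p.2.2).2, q.1.2, zero_smul]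
        show ((((p.1 * q.1 : charKer χ) : B)) : A) + ((p.2 * q.2 : Asub) : A) = _
        push_cast
        rw [add_mul, mul_add, mul_add, h1, h2, add_zero, zero_add]
      map_star' := fun p => by
        show (((star p.1 : charKer χ) : B) : A) + ((star p.2 : Asub) : A) = _
        simp [star_add] }
  have hψ : ∀ p : charKer χ × Asub, ψ p = ((p.1 : B) : A) + (p.2 : A) := fun _ => rfl
  let φ : Unitization ℂ (charKer χ × Asub) →⋆ₐ[ℂ] A := Unitization.starLift ψ
  have hφ : ∀ x : Unitization ℂ (charKer χ × Asub),
      φ x = x.fst • (1 : A) + (((x.snd.1 : B) : A) + (x.snd.2 : A)) := by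
    intro x
    show algebraMap ℂ A x.fst + ψ x.snd = _
    rw [Algebra.algebraMap_eq_smul_one, hψ]
  -- injectivity
  have hker : ∀ x : Unitization ℂ (charKer χ × Asub), φ x = 0 → x = 0 := by
    intro x hx
    rw [hφ] at hx
    set k := x.snd.1 with hk
    set a := x.snd.2 with ha
    have h1B : (1 : A) ∈ B := B.one_mem
    let b : B := x.fst • 1 + (k : B)
    have hbA : (b : A) = x.fst • (1 : A) + ((k : B) : A) := rfl
    have hsum : (b : A) + (a : A) = 0 := by rw [hbA, add_assoc]; exact hx
    obtain ⟨hb0, ha0⟩ := hzero b (a : A) a.2 hsum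
    have hbB : b = 0 := Subtype.ext hb0
    have haA : a = 0 := Subtype.ext ha0
    have hχb : χ b = 0 := by rw [hbB, map_zero]
    have hfst : x.fst = 0 := by
      have := hχb
      rw [map_add, map_smul, map_one, k.2, add_zero, smul_eq_mul, mul_one] at this
      exact this
    have hkB : (k : B) = 0 := by
      have hbB' : x.fst • (1 : B) + (k : B) = 0 := hbB
      rw [hfst, zero_smul, zero_add] at hbB'
      exact hbB'
    have hk0 : k = 0 := Subtype.ext hkB
    have : x.snd = 0 := Prod.ext hk0 haA
    exact Unitization.ext hfst this
  have hinj : Function.Injective φ := by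
    intro x y h
    have : φ (x - y) = 0 := by rw [map_sub, h, sub_self]
    have := hker _ this
    exact sub_eq_zero.mp this
  refine ⟨φ.range, ?_, ?_⟩
  · ext x
    simp only [StarSubalgebra.coe_toSubalgebra, Set.mem_setOf_eq]
    constructor
    · rintro ⟨y, rfl⟩
      refine ⟨((y.fst • 1 + (y.snd.1 : B) : B) : A), (y.fst • 1 + (y.snd.1 : B) : B).2,
        (y.snd.2 : A), y.snd.2.2, ?_⟩
      show φ y = _
      rw [hφ]
      push_cast
      abel
    · rintro ⟨b, hb, a, haa, rfl⟩
      refine ⟨Unitization.inl (χ ⟨b, hb⟩) +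
        Unitization.inr ((⟨⟨b, hb⟩ - χ ⟨b, hb⟩ • 1, by
          show χ _ = 0
          rw [map_sub, map_smul, map_one, smul_eq_mul, mul_one, sub_self]⟩, ⟨a, haa⟩) : charKer χ × Asub), ?_⟩
      show φ _ = _
      rw [hφ]
      simp only [Unitization.fst_add, Unitization.fst_inl, Unitization.fst_inr, add_zero,
        Unitization.snd_add, Unitization.snd_inl, Unitization.snd_inr, zero_add]
      push_cast
      abel
  · refine ⟨StarAlgEquiv.ofInjective φ hinj, ?_, ?_⟩
    · intro lam
      show φ (algebraMap ℂ _ lam) = lam • 1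
      rw [hφ, Unitization.algebraMap_eq_inl]
      simp
    · intro b hb a
      show φ (Unitization.inr _) = _
      rw [hφ]
      simp
end
end
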